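/- arXiv:1302.0931 — 2 statements merged into one kernel-verified Lean document; each statement's English description precedes it below -/
import Mathlib

section
/- Hall subgroups of finite solvable groups are pronormal. -/
open Pointwise

/-- `conjSub H g` is the conjugate subgroup `H^g = g⁻¹Hg`. -/
def conjSub {G : Type*} [Group G] (H : Subgroup G) (g : G) : Subgroup G :=
  MulAut.conj g⁻¹ • H

/-- `H` is pronormal: for every `g`, `H` and `H^g` are conjugate in `⟨H, H^g⟩`. -/
def IsPronormal {G : Type*} [Group G] (H : Subgroup G) : Prop :=
  ∀ g : G, ∃ x ∈ H ⊔ conjSub H g, conjSub H x = conjSub H g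

section conjSubLemmas
variable {G : Type*} [Group G]

theorem mem_conjSub {H : Subgroup G} {g a : G} : a ∈ conjSub H g ↔ g * a * g⁻¹ ∈ H := by
  rw [conjSub, Subgroup.mem_pointwise_smul_iff_inv_smul_mem]
  show (MulAut.conj g⁻¹)⁻¹ a ∈ H ↔ _
  rw [← map_inv, inv_inv, MulAut.conj_apply]

theorem conjSub_eq_map (H : Subgroup G) (g : G) :
    conjSub H g = H.map (MulAut.conj g⁻¹).toMonoidHom :=
  Subgroup.pointwise_smul_def _

theorem conjSub_one (H : Subgroup G) : conjSub H 1 = H := by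
  ext a; simp [mem_conjSub]

theorem conjSub_conjSub (H : Subgroup G) (g h : G) :
    conjSub (conjSub H g) h = conjSub H (g * h) := by
  ext a; simp [mem_conjSub, mul_assoc]

theorem card_conjSub (H : Subgroup G) (g : G) : Nat.card (conjSub H g) = Nat.card H := by
  rw [conjSub_eq_map]
  exact (Nat.card_congr (Subgroup.equivMapOfInjective H _ (MulAut.conj g⁻¹).injective).toEquiv).symm

theorem index_conjSub (H : Subgroup G) (g : G) : (conjSub H g).index = H.index := by
  rw [conjSub_eq_map, Subgroup.index_map]
  have h1 : (MulEquiv.toMonoidHom (MulAut.conj g⁻¹)).ker = ⊥ :=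
    (MonoidHom.ker_eq_bot_iff _).mpr (MulAut.conj g⁻¹).injective
  have h2 : (MulEquiv.toMonoidHom (MulAut.conj g⁻¹)).range = ⊤ :=
    MonoidHom.range_eq_top_of_surjective _ (MulAut.conj g⁻¹).surjective
  rw [h1, h2, sup_bot_eq, Subgroup.index_top, mul_one]

theorem conjSub_le_conjSub {H K : Subgroup G} (h : H ≤ K) (g : G) : conjSub H g ≤ conjSub K g :=
  fun _ ha => mem_conjSub.mpr (h (mem_conjSub.mp ha))

theorem conjSub_of_normal (N : Subgroup G) [N.Normal] (g : G) : conjSub N g = N := by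
  ext a
  rw [mem_conjSub]
  constructor
  · intro h
    have := Subgroup.Normal.conj_mem ‹N.Normal› _ h g⁻¹
    simpa [mul_assoc] using this
  · intro h
    exact Subgroup.Normal.conj_mem ‹N.Normal› _ h g

theorem conjSub_sup (H K : Subgroup G) (g : G) :
    conjSub (H ⊔ K) g = conjSub H g ⊔ conjSub K g := by
  simp only [conjSub_eq_map, Subgroup.map_sup]

theorem conjSub_inf (H K : Subgroup G) (g : G) :
    conjSub (H ⊓ K) g = conjSub H g ⊓ conjSub K g := by
  ext a; simp [mem_conjSub]

theorem map_conjSub {G' : Type*} [Group G'] (f : G →* G') (H : Subgroup G) (g : G) :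
    (conjSub H g).map f = conjSub (H.map f) (f g) := by
  ext a
  simp only [Subgroup.mem_map, mem_conjSub]
  constructor
  · rintro ⟨x, hx, rfl⟩
    exact ⟨g * x * g⁻¹, hx, by simp [mul_assoc]⟩
  · rintro ⟨y, hy, hya⟩
    refine ⟨g⁻¹ * y * g, by simpa [mul_assoc] using hy, ?_⟩
    rw [map_mul, map_mul, map_inv, hya]; group

theorem comap_conjSub {G' : Type*} [Group G'] (f : G →* G') (H' : Subgroup G') (g : G) :
    (conjSub H' (f g)).comap f = conjSub (H'.comap f) g := by
  ext a
  simp [mem_conjSub, Subgroup.mem_comap]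

theorem conjSub_mem_iff {H : Subgroup G} {g a : G} : a ∈ conjSub H g ↔ ∃ h ∈ H, a = g⁻¹ * h * g := by
  rw [mem_conjSub]
  constructor
  · intro h; exact ⟨g * a * g⁻¹, h, by group⟩
  · rintro ⟨h, hh, rfl⟩; simpa [mul_assoc] using hh

end conjSubLemmas

section SZ
variable {G : Type*} [Group G] [Finite G]

open Subgroup MulOpposite MulAction

theorem sz_conj (N : Subgroup G) [N.Normal] [IsMulCommutative N]
    (hN : Nat.Coprime (Nat.card N) N.index) {H K : Subgroup G}
    (hH : N.IsComplement' H) (hK : N.IsComplement' K) : ∃ g : G, conjSub H g = K := by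
  classical
  have : N.FiniteIndex := N.finiteIndex_of_finite_quotient
  have key : ∀ (L : Subgroup G) (hLt : IsComplement (L : Set G) (N : Set G)),
      N.IsComplement' L → ∀ C : N.QuotientDiff,
      C = Quotient.mk'' ⟨(L : Set G), hLt⟩ → L = stabilizer G C := by
    intro L hLt hL C hC
    have hle : L ≤ stabilizer G C := by
      intro g hg
      have hset : (op g⁻¹ • (⟨(L : Set G), hLt⟩ : N.LeftTransversal))
          = ⟨(L : Set G), hLt⟩ := by
        apply Subtype.ext
        show op g⁻¹ • (L : Set G) = L
        ext x
        constructor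
        · rintro ⟨y, hy, rfl⟩
          exact L.mul_mem hy (L.inv_mem hg)
        · intro hx
          exact ⟨x * g, L.mul_mem hx hg, by simp [mul_assoc]⟩
      rw [mem_stabilizer_iff, hC]
      show Quotient.mk'' (op g⁻¹ • (⟨(L : Set G), hLt⟩ : N.LeftTransversal)) = _
      rw [hset]
    have hcomp : N.IsComplement' (stabilizer G C) :=
      Subgroup.isComplement'_stabilizer_of_coprime hN
    have hcard : Nat.card L = Nat.card (stabilizer G C) := by
      have h1 := hL.card_mul
      have h2 := hcomp.card_mul
      exact Nat.eq_of_mul_eq_mul_left Nat.card_pos (h1.trans h2.symm)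
    exact Subgroup.eq_of_le_of_card_ge hle (le_of_eq hcard.symm)
  have hHt : IsComplement (H : Set G) (N : Set G) := hH.symm
  have hKt : IsComplement (K : Set G) (N : Set G) := hK.symm
  set A : N.QuotientDiff := Quotient.mk'' ⟨(H : Set G), hHt⟩
  set B : N.QuotientDiff := Quotient.mk'' ⟨(K : Set G), hKt⟩
  have hA : H = stabilizer G A := key H hHt hH A rfl
  have hB : K = stabilizer G B := key K hKt hK B rfl
  obtain ⟨n, hn⟩ := Subgroup.exists_smul_eq hN A B
  refine ⟨(n : G)⁻¹, ?_⟩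
  have hsmul : ((n : G) • A) = B := hn
  rw [hA, hB, ← hsmul, stabilizer_smul_eq_stabilizer_map_conj]
  ext a
  rw [conjSub_mem_iff]
  simp only [Subgroup.mem_map, MulAut.conj_apply, MulEquiv.coe_toMonoidHom]
  constructor
  · rintro ⟨h, hh, rfl⟩
    exact ⟨h, hh, by group⟩
  · rintro ⟨h, hh, rfl⟩
    exact ⟨h, hh, by group⟩

end SZ


open scoped commutatorElement in
theorem exists_elem_abelian_normal (G : Type*) [Group G] [Finite G] [Group.IsSolvable G] [Nontrivial G] :
    ∃ (p : ℕ) (N : Subgroup G), p.Prime ∧ N.Normal ∧ N ≠ ⊥ ∧ IsMulCommutative N ∧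
      ∀ x ∈ N, x ^ p = 1 := by
  classical
  -- last nontrivial term of the derived series
  obtain ⟨n, hn⟩ := Group.IsSolvable.solvable (G := G)
  have h0 : derivedSeries G 0 ≠ ⊥ := by
    rw [derivedSeries_zero]
    exact fun h => (top_ne_bot h)
  have hex : ∃ m, derivedSeries G m = ⊥ := ⟨n, hn⟩
  have hmbot : derivedSeries G (Nat.find hex) = ⊥ := Nat.find_spec hex
  have hmne : Nat.find hex ≠ 0 := fun h => h0 (by rwa [h] at hmbot)
  obtain ⟨k, hk⟩ := Nat.exists_eq_succ_of_ne_zero hmne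
  have hkne : derivedSeries G k ≠ ⊥ := Nat.find_min hex (hk ▸ Nat.lt_succ_self k)
  set A : Subgroup G := derivedSeries G k with hA
  have hAnormal : A.Normal := derivedSeries_normal G k
  have hAcomm_bot : ⁅A, A⁆ = ⊥ := by
    rw [hA, ← derivedSeries_succ, ← Nat.succ_eq_add_one, ← hk]; exact hmbot
  have hAcomm : ∀ x ∈ A, ∀ y ∈ A, x * y = y * x := by
    intro x hx y hy
    have hmem : ⁅x, y⁆ ∈ (⊥ : Subgroup G) :=
      hAcomm_bot ▸ Subgroup.commutator_mem_commutator hx hy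
    rw [Subgroup.mem_bot, commutatorElement_def] at hmem
    calc x * y = (x * y * x⁻¹ * y⁻¹) * (y * x) := by group
    _ = y * x := by rw [hmem]; group
  -- pick a prime p dividing card A
  have hAnt : Nontrivial A := (Subgroup.nontrivial_iff_ne_bot A).mpr hkne
  have hcardA : Nat.card A ≠ 1 := Finite.one_lt_card.ne'
  set p := (Nat.card A).minFac with hpdef
  have hp : p.Prime := Nat.minFac_prime hcardA
  have : Fact p.Prime := ⟨hp⟩
  obtain ⟨g, hg⟩ := exists_prime_orderOf_dvd_card' (G := A) p (Nat.minFac_dvd _)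
  -- the p-torsion subgroup of A
  refine ⟨p, {
    carrier := {x : G | x ∈ A ∧ x ^ p = 1}
    one_mem' := ⟨A.one_mem, one_pow p⟩
    mul_mem' := by
      rintro a b ⟨haA, hap⟩ ⟨hbA, hbp⟩
      refine ⟨A.mul_mem haA hbA, ?_⟩
      rw [Commute.mul_pow (hAcomm a haA b hbA), hap, hbp, one_mul]
    inv_mem' := by
      rintro a ⟨haA, hap⟩
      exact ⟨A.inv_mem haA, by rw [inv_pow, hap, inv_one]⟩ }, hp, ?_, ?_, ?_, ?_⟩
  · constructor
    intro x hx c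
    refine ⟨hAnormal.conj_mem x hx.1 c, ?_⟩
    have : (c * x * c⁻¹) ^ p = c * x ^ p * c⁻¹ := conj_pow
    rw [this, hx.2, mul_one, mul_inv_cancel]
  · intro hbot
    have hgmem : (g : G) ∈ ({x : G | x ∈ A ∧ x ^ p = 1} : Set G) := by
      refine ⟨g.2, ?_⟩
      have : g ^ p = 1 := by rw [← hg]; exact pow_orderOf_eq_one g
      exact_mod_cast congrArg (Subtype.val) this
    have hg1 : (g : G) = 1 := by
      have hm2 : (g : G) ∈ ({x : G | x ∈ A ∧ x ^ p = 1} : Set G) := hgmem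
      have : (g : G) ∈ ((⊥ : Subgroup G) : Set G) := by rw [← hbot]; exact hm2
      simpa using this
    have : g = 1 := Subtype.ext hg1
    rw [this, orderOf_one] at hg
    exact hp.one_lt.ne' hg.symm
  · constructor
    constructor
    rintro ⟨a, ha⟩ ⟨b, hb⟩
    exact Subtype.ext (hAcomm a ha.1 b hb.1)
  · exact fun x hx => hx.2

section Counting
set_option linter.unusedSectionVars false
variable {G : Type*} [Group G] [Finite G]

theorem card_subgroupOf' {H K : Subgroup G} (h : H ≤ K) :
    Nat.card (H.subgroupOf K) = Nat.card H :=
  Nat.card_congr (Subgroup.subgroupOfEquivOfLe h).toEquiv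

theorem card_subgroupOf_eq_card_inf (H K : Subgroup G) :
    Nat.card (H.subgroupOf K) = Nat.card (H ⊓ K : Subgroup G) := by
  have : H.subgroupOf K = (H ⊓ K).subgroupOf K := by
    ext x
    simp [Subgroup.mem_subgroupOf, x.2]
  rw [this, card_subgroupOf' inf_le_right]

theorem card_map_mul_card_ker {G' : Type*} [Group G'] (f : G →* G') (A : Subgroup G) :
    Nat.card (A.map f) * Nat.card (f.ker ⊓ A : Subgroup G) = Nat.card A := by
  classical
  set φ := f.comp A.subtype with hφ
  have hrange : φ.range = A.map f := by
    ext x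
    simp only [MonoidHom.mem_range, Subgroup.mem_map, hφ, MonoidHom.comp_apply]
    constructor
    · rintro ⟨a, rfl⟩; exact ⟨a, a.2, rfl⟩
    · rintro ⟨a, ha, rfl⟩; exact ⟨⟨a, ha⟩, rfl⟩
  have hker : φ.ker = f.ker.subgroupOf A := rfl
  have h1 : Nat.card A = Nat.card (A ⧸ φ.ker) * Nat.card φ.ker :=
    Subgroup.card_eq_card_quotient_mul_card_subgroup φ.ker
  have h2 : Nat.card (A ⧸ φ.ker) = Nat.card φ.range :=
    Nat.card_congr (QuotientGroup.quotientKerEquivRange φ).toEquiv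
  rw [h1, h2, hrange, hker, card_subgroupOf_eq_card_inf]

theorem relIndex_sup_mul_card_inf (A N : Subgroup G) [N.Normal] :
    A.relIndex (A ⊔ N) * Nat.card (N ⊓ A : Subgroup G) = Nat.card N := by
  have hArel : Nat.card (A ⊔ N : Subgroup G) = A.relIndex (A ⊔ N) * Nat.card A := by
    rw [mul_comm, ← card_subgroupOf' (le_sup_left : A ≤ A ⊔ N)]
    exact (Subgroup.card_mul_index (A.subgroupOf (A ⊔ N))).symm
  have hNrel : Nat.card (A ⊔ N : Subgroup G) = N.relIndex (A ⊔ N) * Nat.card N := by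
    rw [mul_comm, ← card_subgroupOf' (le_sup_right : N ≤ A ⊔ N)]
    exact (Subgroup.card_mul_index (N.subgroupOf (A ⊔ N))).symm
  have hsecond : N.relIndex A = N.relIndex (A ⊔ N) := by
    have := Nat.card_congr (QuotientGroup.quotientInfEquivProdNormalQuotient A N).toEquiv
    simpa [Subgroup.relIndex, Subgroup.index] using this
  have hc3 : N.relIndex A * Nat.card (N ⊓ A : Subgroup G) = Nat.card A := by
    rw [mul_comm, ← card_subgroupOf_eq_card_inf]
    exact Subgroup.card_mul_index (N.subgroupOf A)
  have hpos : 0 < N.relIndex A := Nat.pos_of_ne_zero (Subgroup.index_ne_zero_of_finite (H := N.subgroupOf A))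
  apply Nat.eq_of_mul_eq_mul_left hpos
  calc N.relIndex A * (A.relIndex (A ⊔ N) * Nat.card (N ⊓ A : Subgroup G))
      = A.relIndex (A ⊔ N) * (N.relIndex A * Nat.card (N ⊓ A : Subgroup G)) := by ring
    _ = A.relIndex (A ⊔ N) * Nat.card A := by rw [hc3]
    _ = Nat.card (A ⊔ N : Subgroup G) := hArel.symm
    _ = N.relIndex (A ⊔ N) * Nat.card N := hNrel
    _ = N.relIndex A * Nat.card N := by rw [hsecond]

theorem card_sup_mul_card_inf (A N : Subgroup G) [N.Normal] :
    Nat.card (A ⊔ N : Subgroup G) * Nat.card (N ⊓ A : Subgroup G)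
      = Nat.card A * Nat.card N := by
  have hArel : Nat.card (A ⊔ N : Subgroup G) = A.relIndex (A ⊔ N) * Nat.card A := by
    rw [mul_comm, ← card_subgroupOf' (le_sup_left : A ≤ A ⊔ N)]
    exact (Subgroup.card_mul_index (A.subgroupOf (A ⊔ N))).symm
  rw [hArel, ← relIndex_sup_mul_card_inf A N]
  ring

end Counting


universe u

theorem conjSub_bot {G : Type u} [Group G] (g : G) : conjSub (⊥ : Subgroup G) g = ⊥ := by
  ext a; simp [mem_conjSub]

theorem hall_conj_aux : ∀ (n : ℕ) (G : Type u) [Group G] [Finite G] [Group.IsSolvable G],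
    Nat.card G ≤ n → ∀ A B : Subgroup G,
    Nat.Coprime (Nat.card A) A.index → Nat.Coprime (Nat.card B) B.index →
    Nat.card A = Nat.card B → ∃ g : G, conjSub A g = B := by
  intro n
  induction n with
  | zero =>
    intro G _ _ _ hle
    exact absurd hle (by have := Nat.card_pos (α := G); omega)
  | succ n IH =>
    intro G _ _ _ hle A B hA hB hAB
    by_cases hG : Nat.card G ≤ n
    · exact IH G hG A B hA hB hAB
    by_cases htriv : Nat.card G = 1
    · have hsub : Subsingleton G := Nat.card_eq_one_iff_unique.mp htriv |>.1
      have hABeq : A = B := by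
        ext x
        have hx1 : x = 1 := Subsingleton.elim x 1
        simp [hx1, A.one_mem, B.one_mem]
      exact ⟨1, by rw [conjSub_one, hABeq]⟩
    have hnt : Nontrivial G := Finite.one_lt_card_iff_nontrivial.mp
      (by have := Nat.card_pos (α := G); omega)
    obtain ⟨p, N, hp, hNnormal, hNbot, hNcomm, hNpow⟩ := exists_elem_abelian_normal G
    haveI := hNnormal
    haveI := hNcomm
    haveI : Fact p.Prime := ⟨hp⟩
    have hpG : IsPGroup p N := fun x =>
      ⟨1, by rw [pow_one]; apply Subtype.ext; push_cast; exact hNpow x x.2⟩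
    obtain ⟨k, hNk⟩ := hpG.exists_card_eq
    -- quotient setup
    set φ := QuotientGroup.mk' N with hφ
    have hφsurj := QuotientGroup.mk'_surjective N
    have hker : φ.ker = N := QuotientGroup.ker_mk' N
    have hNcard1 : 1 < Nat.card N :=
      Finite.one_lt_card_iff_nontrivial.mpr ((Subgroup.nontrivial_iff_ne_bot N).mpr hNbot)
    have hQlt : Nat.card (G ⧸ N) < Nat.card G := by
      have hGQ := Subgroup.card_eq_card_quotient_mul_card_subgroup N
      have hQpos : 0 < Nat.card (G ⧸ N) := Nat.card_pos
      nlinarith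
    have hQle : Nat.card (G ⧸ N) ≤ n := by omega
    have himg : ∀ (X : Subgroup G), Nat.Coprime (Nat.card X) X.index →
        Nat.Coprime (Nat.card (X.map φ)) (X.map φ).index := by
      intro X hX
      have h1 : Nat.card (X.map φ) ∣ Nat.card X :=
        ⟨Nat.card (φ.ker ⊓ X : Subgroup G), (card_map_mul_card_ker φ X).symm⟩
      have h2 : (X.map φ).index ∣ X.index := Subgroup.index_map_dvd (H := X) hφsurj
      exact Nat.Coprime.coprime_dvd_left h1 (Nat.Coprime.coprime_dvd_right h2 hX)
    by_cases hpA : p ∣ Nat.card A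
    · -- Case 1 : N ≤ A and N ≤ B
      have hNle : ∀ (X : Subgroup G), Nat.Coprime (Nat.card X) X.index →
          p ∣ Nat.card X → N ≤ X := by
        intro X hX hpX
        have hpind : ¬ p ∣ X.index := by
          intro h
          have h1 := Nat.eq_one_of_dvd_coprimes hX hpX h
          exact hp.one_lt.ne' h1
        have hr1 : X.relIndex (X ⊔ N) * Nat.card (N ⊓ X : Subgroup G) = Nat.card N :=
          relIndex_sup_mul_card_inf X N
        have hrdvdN : X.relIndex (X ⊔ N) ∣ p ^ k := by rw [← hNk]; exact ⟨Nat.card (N ⊓ X : Subgroup G), hr1.symm⟩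
        have hrdvdI : X.relIndex (X ⊔ N) ∣ X.index :=
          Subgroup.relIndex_dvd_index_of_le le_sup_left
        have hrcop : Nat.Coprime (X.relIndex (X ⊔ N)) X.index :=
          Nat.Coprime.coprime_dvd_left hrdvdN
            (Nat.Coprime.pow_left k ((Nat.Prime.coprime_iff_not_dvd hp).mpr hpind))
        have hr : X.relIndex (X ⊔ N) = 1 := hrcop.eq_one_of_dvd hrdvdI
        exact le_trans le_sup_right (Subgroup.relIndex_eq_one.mp hr)
      have hNA := hNle A hA hpA
      have hNB := hNle B hB (hAB ▸ hpA)
      have hcardmap : ∀ X : Subgroup G, N ≤ X →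
          Nat.card (X.map φ) * Nat.card N = Nat.card X := by
        intro X hNX
        have h := card_map_mul_card_ker φ X
        rwa [hker, inf_eq_left.mpr hNX] at h
      have hcardQ : Nat.card (A.map φ) = Nat.card (B.map φ) := by
        have h1 := hcardmap A hNA
        have h2 := hcardmap B hNB
        have hNpos : 0 < Nat.card N := Nat.card_pos
        rw [hAB] at h1
        exact Nat.eq_of_mul_eq_mul_right hNpos (h1.trans h2.symm)
      obtain ⟨gb, hgb⟩ := IH (G ⧸ N) hQle (A.map φ) (B.map φ) (himg A hA) (himg B hB) hcardQ
      obtain ⟨g, rfl⟩ := hφsurj gb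
      refine ⟨g, ?_⟩
      have h := congrArg (Subgroup.comap φ) hgb
      rw [comap_conjSub, Subgroup.comap_map_eq, Subgroup.comap_map_eq, hker,
        sup_of_le_left hNA, sup_of_le_left hNB] at h
      exact h
    · -- Case 2 : A ⊓ N = ⊥
      have hinfbot : ∀ (X : Subgroup G), Nat.card X = Nat.card A → N ⊓ X = ⊥ := by
        intro X hXA
        have hsub : IsPGroup p (N ⊓ X : Subgroup G) := hpG.to_le inf_le_left
        obtain ⟨m, hm⟩ := hsub.exists_card_eq
        have hdvd : Nat.card (N ⊓ X : Subgroup G) ∣ Nat.card X :=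
          Subgroup.card_dvd_of_le inf_le_right
        rcases Nat.eq_zero_or_pos m with hm0 | hm0
        · rw [hm0, pow_zero] at hm
          exact Subgroup.card_eq_one.mp hm
        · exfalso
          apply hpA
          rw [← hXA]
          exact dvd_trans (dvd_trans (dvd_pow_self p hm0.ne') (hm ▸ dvd_refl _)) hdvd
      have hAbot := hinfbot A rfl
      have hBbot := hinfbot B hAB.symm
      have hcardmap' : ∀ X : Subgroup G, N ⊓ X = ⊥ →
          Nat.card (X.map φ) = Nat.card X := by
        intro X hX
        have h := card_map_mul_card_ker φ X
        rwa [hker, hX, Subgroup.card_bot, mul_one] at h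
      have hcardQ : Nat.card (A.map φ) = Nat.card (B.map φ) := by
        rw [hcardmap' A hAbot, hcardmap' B hBbot, hAB]
      obtain ⟨gb, hgb⟩ := IH (G ⧸ N) hQle (A.map φ) (B.map φ) (himg A hA) (himg B hB) hcardQ
      obtain ⟨g, rfl⟩ := hφsurj gb
      have hM : conjSub A g ⊔ N = B ⊔ N := by
        have h := congrArg (Subgroup.comap φ) hgb
        rw [comap_conjSub, Subgroup.comap_map_eq, Subgroup.comap_map_eq, hker,
          conjSub_sup, conjSub_of_normal N g] at h
        exact h
      set A' := conjSub A g with hA'def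
      set M := A' ⊔ N with hMdef
      have hA'M : A' ≤ M := le_sup_left
      have hBM : B ≤ M := by rw [hM]; exact le_sup_left
      have hNM : N ≤ M := le_sup_right
      have hA'N : N ⊓ A' = ⊥ := by
        rw [hA'def, ← conjSub_of_normal N g, ← conjSub_inf, hAbot, conjSub_bot]
      have hcardA' : Nat.card A' = Nat.card A := card_conjSub A g
      have hMcard : Nat.card M = Nat.card A * Nat.card N := by
        have h := card_sup_mul_card_inf A' N
        rwa [hA'N, Subgroup.card_bot, mul_one, hcardA', ← hMdef] at h
      have hcop : Nat.Coprime (Nat.card N) (Nat.card A) := by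
        rw [hNk]
        exact Nat.Coprime.pow_left k ((Nat.Prime.coprime_iff_not_dvd hp).mpr hpA)
      -- inside M
      set N' := N.subgroupOf M with hN'def
      haveI : N'.Normal := Subgroup.normal_subgroupOf
      haveI : IsMulCommutative N' := Subgroup.subgroupOf_isMulCommutative (H := N) (K := M)
      have hcardN' : Nat.card N' = Nat.card N := card_subgroupOf' hNM
      have hcA'' : Nat.card (A'.subgroupOf M) = Nat.card A := by
        rw [card_subgroupOf' hA'M, hcardA']
      have hcB'' : Nat.card (B.subgroupOf M) = Nat.card A := by
        rw [card_subgroupOf' hBM]; exact hAB.symm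
      have hprodA : Nat.card N' * Nat.card (A'.subgroupOf M) = Nat.card M := by
        rw [hcardN', hcA'', hMcard]; ring
      have hprodB : Nat.card N' * Nat.card (B.subgroupOf M) = Nat.card M := by
        rw [hcardN', hcB'', hMcard]; ring
      have hcompA : N'.IsComplement' (A'.subgroupOf M) :=
        Subgroup.isComplement'_of_coprime hprodA (by rw [hcardN', hcA'']; exact hcop)
      have hcompB : N'.IsComplement' (B.subgroupOf M) :=
        Subgroup.isComplement'_of_coprime hprodB (by rw [hcardN', hcB'']; exact hcop)
      have hidx : N'.index = Nat.card (A'.subgroupOf M) := hcompA.symm.index_eq_card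
      have hN' : Nat.Coprime (Nat.card N') N'.index := by
        rw [hidx, hcardN', hcA'']; exact hcop
      obtain ⟨mm, hmm⟩ := sz_conj N' hN' hcompA hcompB
      refine ⟨g * (mm : G), ?_⟩
      rw [← conjSub_conjSub]
      have h := congrArg (Subgroup.map M.subtype) hmm
      rw [map_conjSub, Subgroup.subgroupOf_map_subtype, Subgroup.subgroupOf_map_subtype,
        inf_of_le_left hA'M, inf_of_le_left hBM] at h
      exact h


theorem stmt_11 {G : Type*} [Group G] [Finite G] [Group.IsSolvable G] (H : Subgroup G)
    (hHall : Nat.Coprime (Nat.card H) H.index) :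
    IsPronormal H := by
  intro g
  set K := H ⊔ conjSub H g with hK
  have hHK : H ≤ K := le_sup_left
  have hCK : conjSub H g ≤ K := le_sup_right
  have c1 : Nat.card (H.subgroupOf K) = Nat.card H := card_subgroupOf' hHK
  have c2 : Nat.card ((conjSub H g).subgroupOf K) = Nat.card H := by
    rw [card_subgroupOf' hCK, card_conjSub]
  have e1 : (H.subgroupOf K).index = H.relIndex K := rfl
  have e2 : ((conjSub H g).subgroupOf K).index = (conjSub H g).relIndex K := rfl
  have i1 : (H.subgroupOf K).index ∣ H.index := by
    rw [e1]; exact Subgroup.relIndex_dvd_index_of_le hHK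
  have i2 : ((conjSub H g).subgroupOf K).index ∣ H.index := by
    rw [e2, ← index_conjSub H g]
    exact Subgroup.relIndex_dvd_index_of_le hCK
  have hall1 : Nat.Coprime (Nat.card (H.subgroupOf K)) (H.subgroupOf K).index := by
    rw [c1]; exact Nat.Coprime.coprime_dvd_right i1 hHall
  have hall2 : Nat.Coprime (Nat.card ((conjSub H g).subgroupOf K))
      ((conjSub H g).subgroupOf K).index := by
    rw [c2]; exact Nat.Coprime.coprime_dvd_right i2 hHall
  obtain ⟨x, hx⟩ := hall_conj_aux (Nat.card K) K le_rfl (H.subgroupOf K)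
    ((conjSub H g).subgroupOf K) hall1 hall2 (c1.trans c2.symm)
  refine ⟨(x : G), x.2, ?_⟩
  have h := congrArg (Subgroup.map K.subtype) hx
  rw [map_conjSub, Subgroup.subgroupOf_map_subtype, Subgroup.subgroupOf_map_subtype,
    inf_of_le_left hHK, inf_of_le_left hCK] at h
  exact h
end

section
/- Let G be a finite group, H a π-Hall subgroup of G containing a Sylow 2-subgroup S of G with 2 ∈ π, and suppose N_G(S) = S. Then H is pronormal in G. -/
open Pointwise

/-- `H` is a `π`-Hall subgroup: `|H|` is a `π`-number and its index a `π'`-number. -/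
def IsPiHall {G : Type*} [Group G] (π : Set ℕ) (H : Subgroup G) : Prop :=
  (∀ p : ℕ, p.Prime → p ∣ Nat.card H → p ∈ π) ∧
  (∀ p : ℕ, p.Prime → p ∣ H.index → p ∉ π)

theorem conjSub_mul {G : Type*} [Group G] (H : Subgroup G) (a b : G) :
    conjSub H (a * b) = conjSub (conjSub H a) b := by
  simp [conjSub, mul_inv_rev, map_mul, mul_smul]

theorem conjSub_eq_of_mem {G : Type*} [Group G] {H : Subgroup G} {h : G}
    (hh : h ∈ H) : conjSub H h = H := by
  ext x
  rw [conjSub, Subgroup.mem_pointwise_smul_iff_inv_smul_mem]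
  simp only [MulAut.smul_def, map_inv, inv_inv, MulAut.conj_apply]
  constructor
  · intro hx
    have := mul_mem (mul_mem (inv_mem hh) hx) hh
    simpa [mul_assoc] using this
  · intro hx
    exact mul_mem (mul_mem hh hx) (inv_mem hh)

theorem conjSub_mono {G : Type*} [Group G] {H K : Subgroup G} (h : H ≤ K)
    (g : G) : conjSub H g ≤ conjSub K g :=
  Subgroup.pointwise_smul_le_pointwise_smul_iff.mpr h

theorem stmt_12 {G : Type*} [Group G] [Finite G] (π : Set ℕ) (h2 : 2 ∈ π)
    (H : Subgroup G) (hHall : IsPiHall π H) (S : Sylow 2 G)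
    (hSH : (S : Subgroup G) ≤ H)
    (hself : Subgroup.normalizer ((S : Subgroup G) : Set G) = S) :
    IsPronormal H := by
  intro g
  set K : Subgroup G := H ⊔ conjSub H g with hK
  have h1 : (S : Subgroup G) ≤ K := hSH.trans le_sup_left
  have h2' : ((g⁻¹ • S : Sylow 2 G) : Subgroup G) ≤ K := by
    rw [Sylow.coe_subgroup_smul]
    exact le_trans (conjSub_mono hSH g) le_sup_right
  obtain ⟨k, hk⟩ := MulAction.exists_smul_eq K ((g⁻¹ • S).subtype h2') (S.subtype h1)
  rw [Sylow.smul_subtype] at hk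
  have hk2 : ((k : G) * g⁻¹) • S = S := by
    have := Sylow.subtype_injective hk
    rwa [Subgroup.smul_def, smul_smul] at this
  have hmem : (k : G) * g⁻¹ ∈ (S : Subgroup G) := by
    rw [← hself]
    exact Sylow.smul_eq_iff_mem_normalizer.mp hk2
  have hmemH : (k : G) * g⁻¹ ∈ H := hSH hmem
  refine ⟨(k : G), k.2, ?_⟩
  have hg : g = ((k : G) * g⁻¹)⁻¹ * (k : G) := by group
  rw [hg, conjSub_mul, conjSub_eq_of_mem (inv_mem hmemH)]
end
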